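/- For any a > 0, the internal discharge power g(d) = d / (0.5 + 0.5·√(1 − a·d)) is convex and strictly increasing on [0, 1/a]. -/

import Mathlib

/-- For any `a > 0`, the internal discharge power `g(d) = d / (0.5 + 0.5·√(1 - a·d))`
is convex and strictly increasing on `[0, 1/a]`. -/
theorem stmt_5 (a : ℝ) (ha : 0 < a) :
    ConvexOn ℝ (Set.Icc 0 (1 / a))
      (fun d : ℝ => d / (0.5 + 0.5 * Real.sqrt (1 - a * d))) ∧
    StrictMonoOn (fun d : ℝ => d / (0.5 + 0.5 * Real.sqrt (1 - a * d)))
      (Set.Icc 0 (1 / a)) := by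
  have heq : Set.EqOn (fun d : ℝ => d / (0.5 + 0.5 * Real.sqrt (1 - a * d)))
      (fun d : ℝ => 2 / a * (-Real.sqrt (1 - a * d)) + 2 / a) (Set.Icc 0 (1 / a)) := by
    intro d hd
    obtain ⟨hd0, hd1⟩ := hd
    have had : a * d ≤ 1 := by
      have := (le_div_iff₀ ha).mp hd1; linarith
    have h1 : (0:ℝ) ≤ 1 - a * d := by linarith
    have hs0 : 0 ≤ Real.sqrt (1 - a * d) := Real.sqrt_nonneg _
    have hs2 : Real.sqrt (1 - a * d) ^ 2 = 1 - a * d := Real.sq_sqrt h1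
    have hden : (0:ℝ) < 0.5 + 0.5 * Real.sqrt (1 - a * d) := by linarith
    simp only
    field_simp
    nlinarith [hs2, (by rw [mul_comm d a]; exact hs2 : Real.sqrt (1 - d * a) ^ 2 = 1 - d * a)]
  have hconc : ConcaveOn ℝ (Set.Icc 0 (1 / a)) (fun d : ℝ => Real.sqrt (1 - a * d)) := by
    have h := Real.strictConcaveOn_sqrt.concaveOn.comp_affineMap
      (AffineMap.lineMap (1:ℝ) (1 - a))
    have hsub : Set.Icc (0:ℝ) (1 / a) ⊆ (AffineMap.lineMap (1:ℝ) (1 - a)) ⁻¹' Set.Ici 0 := by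
      intro d hd
      obtain ⟨hd0, hd1⟩ := hd
      have had : a * d ≤ 1 := by have := (le_div_iff₀ ha).mp hd1; linarith
      simp [AffineMap.lineMap_apply]
      nlinarith
    have h' := h.subset hsub (convex_Icc _ _)
    convert h' using 2 with d
    case e'_4 | e'_5 | e'_6 | e'_9 | e'_10 => rfl
    simp [AffineMap.lineMap_apply]
    ring_nf
  have hconv : ConvexOn ℝ (Set.Icc 0 (1 / a))
      (fun d : ℝ => 2 / a * (-Real.sqrt (1 - a * d)) + 2 / a) := by
    have := (hconc.neg.smul (by positivity : (0:ℝ) ≤ 2 / a)).add_const (2 / a)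
    convert this using 2 with d <;> rfl
  constructor
  · refine ⟨convex_Icc _ _, ?_⟩
    intro x hx y hy α β hα hβ hab
    have hmem := (convex_Icc (0:ℝ) (1/a)) hx hy hα hβ hab
    rw [heq hx, heq hy, heq hmem]
    exact hconv.2 hx hy hα hβ hab
  · intro x hx y hy hxy
    rw [heq hx, heq hy]
    simp only
    have hx1 : a * x ≤ 1 := by
      have := (le_div_iff₀ ha).mp hx.2; linarith
    have hy0 : 0 ≤ 1 - a * y := by
      have := (le_div_iff₀ ha).mp hy.2; linarith
    have hlt : 1 - a * y < 1 - a * x := by nlinarith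
    have hsq : Real.sqrt (1 - a * y) < Real.sqrt (1 - a * x) :=
      Real.sqrt_lt_sqrt hy0 hlt
    have h2a : 0 < 2 / a := by positivity
    nlinarith
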